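/- arXiv:2604.27816 — 2 statements merged into one kernel-verified Lean document; each statement's English description precedes it below -/
import Mathlib

section
/- Let A be a densely ordered abelian group and G a dense subgroup of A (for all a < b in A there exists g ∈ G with a < g < b). Let x₁ < x₂ < … < x_k be elements of A with 2xᵢ < x_{i+1} and 0 < xᵢ for all i, and suppose xᵢ − xⱼ ∉ G for all i ≠ j. Then for every pair i < j there exists α ∈ A with x_{i-1} < α < xᵢ < 2α < x_{i+1} and xⱼ ∈ α + G. -/
/-- In a densely ordered abelian group `A` with a dense subgroup `G`, given
`0 = x₀`, `x₁ < ⋯ < x_k` positive with `2xᵢ < x_{i+1}` and pairwise in distinct cosets of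
`G`, for every pair `i < j` there is `α` with `x_{i-1} < α < xᵢ < 2α < x_{i+1}` and
`xⱼ ∈ α + G`. -/
theorem stmt11 {A : Type*} [AddCommGroup A] [LinearOrder A] [IsOrderedAddMonoid A] [DenselyOrdered A]
    (G : AddSubgroup A)
    (hdense : ∀ a b : A, a < b → ∃ g ∈ G, a < g ∧ g < b)
    (k : ℕ) (x : ℕ → A) (h0 : x 0 = 0)
    (hpos : ∀ i, 1 ≤ i → i ≤ k → 0 < x i)
    (hmono : ∀ i j, 1 ≤ i → i < j → j ≤ k → x i < x j)
    (hstep : ∀ i, 1 ≤ i → i < k → 2 • x i < x (i + 1))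
    (hG : ∀ i j, 1 ≤ i → i ≤ k → 1 ≤ j → j ≤ k → i ≠ j → x i - x j ∉ G) :
    ∀ i j, 1 ≤ i → i < j → j ≤ k → ∃ α : A,
      x (i - 1) < α ∧ α < x i ∧ x i < 2 • α ∧ 2 • α < x (i + 1) ∧ x j - α ∈ G := by
  intro i j hi hij hjk
  have hik : i < k := lt_of_lt_of_le hij hjk
  have hxi : 0 < x i := hpos i hi hik.le
  obtain ⟨m, hm0, hmx⟩ := exists_between hxi
  have hmax : max m (x i - m) < x i := by
    rw [max_lt_iff]
    exact ⟨hmx, sub_lt_self _ hm0⟩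
  obtain ⟨m', hm1, hm2⟩ := exists_between hmax
  have h1 : m < m' := lt_of_le_of_lt (le_max_left _ _) hm1
  have h2 : x i - m < m' := lt_of_le_of_lt (le_max_right _ _) hm1
  have h2m : x i < m' + m' :=
    lt_trans (sub_lt_iff_lt_add.mp h2) (add_lt_add_right h1 m')
  obtain ⟨g, hgG, hg1, hg2⟩ := hdense (x j - x i) (x j - m') (sub_lt_sub_left hm2 (x j))
  have hα1 : m' < x j - g := lt_sub_comm.mp hg2
  have hα2 : x j - g < x i := sub_lt_comm.mp hg1
  have h2α : x i < 2 • (x j - g) := by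
    rw [two_smul]
    exact lt_trans h2m (add_lt_add hα1 hα1)
  refine ⟨x j - g, ?_, hα2, h2α, ?_, by simpa using hgG⟩
  · rcases eq_or_lt_of_le hi with h1' | h1'
    · have he : i - 1 = 0 := by omega
      rw [he, h0]
      exact lt_trans (hm0.trans h1) hα1
    · have hi1 : 1 ≤ i - 1 := by omega
      have hstep' : 2 • x (i - 1) < x (i - 1 + 1) := hstep (i - 1) hi1 (by omega)
      have heq : i - 1 + 1 = i := by omega
      rw [heq, two_smul] at hstep'
      by_contra h
      push_neg at h
      rw [two_smul] at h2α
      exact absurd (lt_trans hstep' h2α) (not_lt.2 (add_le_add h h))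
  · have hs := hstep i hi hik
    rw [two_smul] at *
    exact lt_trans (add_lt_add hα2 hα2) hs
end

section
/- Let A be a densely ordered abelian group with a dense subgroup G such that A/G is infinite. Define F = { {x : a < x < 2a} ∪ (a + G) : a ∈ A, 0 < a }. Then for every k ≥ 2 there exists a subset B ⊆ A with |B| = k such that every subset of B of size at most 2 is of the form S ∩ B for some S ∈ F; consequently the shatter function of F satisfies π(k) ≥ C(k,0)+C(k,1)+C(k,2) for all k ≥ 2. -/
/-- In a densely ordered abelian group `A` with a dense subgroup `G` such that `A/G` is
infinite, the family `F = { (a, 2a) ∪ (a + G) : 0 < a }` shatters, on some `k`-element set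
`B`, all subsets of size at most `2`; consequently its shatter function satisfies
`π(k) ≥ C(k,0)+C(k,1)+C(k,2)` for all `k ≥ 2`. -/
theorem stmt17 {A : Type*} [AddCommGroup A] [LinearOrder A] [IsOrderedAddMonoid A] [DenselyOrdered A]
    (G : AddSubgroup A)
    (hdense : ∀ a b : A, a < b → ∃ g ∈ G, a < g ∧ g < b)
    (hinf : Infinite (A ⧸ G)) (k : ℕ) (hk : 2 ≤ k) :
    ∃ B : Finset A, B.card = k ∧
      (∀ C : Finset A, C ⊆ B → C.card ≤ 2 → ∃ a : A, 0 < a ∧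
        ({x : A | a < x ∧ x < 2 • a} ∪ (a + ·) '' (G : Set A)) ∩ ↑B = (↑C : Set A)) ∧
      k.choose 0 + k.choose 1 + k.choose 2 ≤
        Set.ncard {T : Set A | ∃ a : A, 0 < a ∧
          T = ({x : A | a < x ∧ x < 2 • a} ∪ (a + ·) '' (G : Set A)) ∩ ↑B} := by
  classical
  -- injective sequence of coset representatives
  obtain ⟨e⟩ : Nonempty (ℕ ↪ A ⧸ G) := ⟨Infinite.natEmbedding _⟩
  set r : ℕ → A := fun n => (e n).out with hr
  have hrout : ∀ n, (QuotientAddGroup.mk (r n) : A ⧸ G) = e n := fun n => Quotient.out_eq _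
  have hrne : ∀ m n : ℕ, m ≠ n → r m - r n ∉ G := by
    intro m n hmn h
    apply hmn
    apply e.injective
    rw [← hrout, ← hrout]
    exact QuotientAddGroup.eq.mpr (by rw [neg_add_eq_sub, ← neg_sub]; exact neg_mem h)
  -- coset density
  have hcos : ∀ t u v : A, u < v → ∃ a : A, a - t ∈ G ∧ u < a ∧ a < v := by
    intro t u v huv
    obtain ⟨g, hg, h1, h2⟩ := hdense (u - t) (v - t) (sub_lt_sub_right huv t)
    exact ⟨t + g, by simpa using hg, sub_lt_iff_lt_add'.mp h1, lt_sub_iff_add_lt'.mp h2⟩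
  -- a positive element
  have hr01 : r 0 ≠ r 1 := by
    intro h
    exact hrne 0 1 (by norm_num) (by rw [h]; simpa using zero_mem G)
  set p0 : A := |r 0 - r 1| with hp0def
  have hp0 : 0 < p0 := abs_pos.mpr (sub_ne_zero.mpr hr01)
  -- recursive step
  have hstep : ∀ x : A, ∀ n : ℕ, ∃ bb : A, bb - r n ∈ G ∧
      ∃ u v : A, 2 • x < u ∧ 0 < u ∧ u < v ∧ v < bb ∧ bb < u + u := by
    intro x n
    set u : A := max x 0 + max x 0 + p0 with hu
    have hux : 2 • x < u := by
      have h1 : x ≤ max x 0 := le_max_left _ _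
      have : x + x ≤ max x 0 + max x 0 := add_le_add h1 h1
      rw [two_nsmul]
      exact lt_of_le_of_lt this (lt_add_of_pos_right _ hp0)
    have hu0 : 0 < u :=
      add_pos_of_nonneg_of_pos (add_nonneg (le_max_right _ _) (le_max_right _ _)) hp0
    obtain ⟨v, hv1, hv2⟩ := exists_between (lt_add_of_pos_left u hu0)
    obtain ⟨bb, hbb, h1, h2⟩ := hcos (r n) v (u + u) hv2
    exact ⟨bb, hbb, u, v, hux, hu0, hv1, h1, h2⟩
  choose F hF using hstep
  set b : ℕ → A := fun n => Nat.rec (F 0 0) (fun m prev => F prev (m+1)) n with hbdef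
  set pre : ℕ → A := fun n => Nat.rec 0 (fun m _ => b m) n with hpredef
  have hbF : ∀ n, b n = F (pre n) n := by
    intro n
    cases n <;> rfl
  have hbG : ∀ n, b n - r n ∈ G := by
    intro n
    rw [hbF]
    exact (hF _ _).1
  have hinv : ∀ n, ∃ u v : A, 2 • pre n < u ∧ 0 < u ∧ u < v ∧ v < b n ∧ b n < u + u := by
    intro n
    rw [hbF]
    exact (hF _ _).2
  -- derived order facts
  have hbpos : ∀ n, 0 < b n := by
    intro n
    obtain ⟨u, v, _, hu0, huv, hvb, _⟩ := hinv n
    exact hu0.trans (huv.trans hvb)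
  have hsucc : ∀ n, 2 • b n < b (n + 1) := by
    intro n
    obtain ⟨u, v, h1, _, huv, hvb, _⟩ := hinv (n + 1)
    have hpre : pre (n + 1) = b n := rfl
    rw [hpre] at h1
    exact h1.trans (huv.trans hvb)
  have hbmono : StrictMono b := by
    apply strictMono_nat_of_lt_succ
    intro n
    refine lt_trans ?_ (hsucc n)
    rw [two_nsmul]
    exact lt_add_of_pos_left _ (hbpos n)
  have hchain : ∀ i j : ℕ, i < j → 2 • b i < b j := by
    intro i j hij
    obtain ⟨m, rfl⟩ := Nat.exists_eq_add_of_le (Nat.succ_le_of_lt hij)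
    have h1 : b i ≤ b (i + m) := hbmono.monotone (Nat.le_add_right _ _)
    have h2 : 2 • b i ≤ 2 • b (i + m) := by rw [two_nsmul, two_nsmul]; exact add_le_add h1 h1
    calc 2 • b i ≤ 2 • b (i + m) := h2
      _ < b (i + m + 1) := hsucc (i + m)
      _ = b (i + 1 + m) := by ring_nf
  -- the set B
  set B : Finset A := (Finset.range k).image b with hBdef
  have hBcard : B.card = k := by
    rw [hBdef, Finset.card_image_of_injective _ hbmono.injective, Finset.card_range]
  have hmemB : ∀ x : A, x ∈ B ↔ ∃ n < k, b n = x := by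
    intro x; simp [hBdef]
  -- coset trace
  have hcotrace : ∀ (a : A) (m : ℕ), a - r m ∈ G → ∀ n : ℕ, (b n - a ∈ G ↔ n = m) := by
    intro a m ham n
    constructor
    · intro h
      by_contra hne
      apply hrne n m hne
      have heq : r n - r m = -(b n - r n) + (b n - a) + (a - r m) := by abel
      rw [heq]
      exact add_mem (add_mem (neg_mem (hbG n)) h) ham
    · intro hnm
      rw [hnm]
      have heq : b m - a = (b m - r m) - (a - r m) := by abel
      rw [heq]
      exact sub_mem (hbG m) ham
  have himg : ∀ a x : A, x ∈ (a + ·) '' (G : Set A) ↔ x - a ∈ G := by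
    intro a x
    constructor
    · rintro ⟨g, hg, rfl⟩
      simpa using hg
    · intro h
      exact ⟨x - a, h, by simp⟩
  -- main shattering claim
  have hmain : ∀ C : Finset A, C ⊆ B → C.card ≤ 2 → ∃ a : A, 0 < a ∧
      ({x : A | a < x ∧ x < 2 • a} ∪ (a + ·) '' (G : Set A)) ∩ ↑B = (↑C : Set A) := by
    intro C hCB hC2
    have h012 : C.card = 0 ∨ C.card = 1 ∨ C.card = 2 := by omega
    rcases h012 with h0 | h1 | h2
    · -- empty set
      obtain ⟨a, haG, ha1, _⟩ := hcos (r k) (b k) (b (k+1)) (hbmono (Nat.lt_succ_self k))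
      refine ⟨a, (hbpos k).trans ha1, ?_⟩
      rw [Finset.card_eq_zero.mp h0]
      ext x
      simp only [Set.mem_inter_iff, Set.mem_union, Set.mem_setOf_eq, Finset.coe_empty,
        Set.mem_empty_iff_false, iff_false, not_and, Finset.mem_coe]
      intro hx hxB
      obtain ⟨n, hn, rfl⟩ := (hmemB _).mp hxB
      rcases hx with ⟨h1, h2⟩ | h
      · exact absurd h1 (not_lt.mpr ((hbmono hn).trans ha1).le)
      · have := (hcotrace a k haG n).mp ((himg a _).mp h)
        omega
    · -- singleton
      obtain ⟨c, rfl⟩ := Finset.card_eq_one.mp h1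
      have hcB : c ∈ B := hCB (Finset.mem_singleton_self c)
      obtain ⟨m, hm, rfl⟩ := (hmemB c).mp hcB
      obtain ⟨a, haG, ha1, _⟩ := hcos (r m) (b k) (b (k+1)) (hbmono (Nat.lt_succ_self k))
      refine ⟨a, (hbpos k).trans ha1, ?_⟩
      ext x
      simp only [Set.mem_inter_iff, Set.mem_union, Set.mem_setOf_eq, Finset.coe_singleton,
        Set.mem_singleton_iff, Finset.mem_coe]
      constructor
      · rintro ⟨hx, hxB⟩
        obtain ⟨n, hn, rfl⟩ := (hmemB _).mp hxB
        rcases hx with ⟨hh1, hh2⟩ | h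
        · exact absurd hh1 (not_lt.mpr ((hbmono hn).trans ha1).le)
        · have hnm := (hcotrace a m haG n).mp ((himg a _).mp h)
          rw [hnm]
      · rintro rfl
        exact ⟨Or.inr ((himg a _).mpr ((hcotrace a m haG m).mpr rfl)), hcB⟩
    · -- pair
      obtain ⟨c, d, hcd, rfl⟩ := Finset.card_eq_two.mp h2
      have hcB : c ∈ B := hCB (by simp)
      have hdB : d ∈ B := hCB (by simp)
      obtain ⟨i0, hi0, rfl⟩ := (hmemB c).mp hcB
      obtain ⟨j0, hj0, rfl⟩ := (hmemB d).mp hdB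
      have hij0 : i0 ≠ j0 := fun h => hcd (by rw [h])
      have key : ∀ i j : ℕ, i < j → j < k → ∃ a : A, 0 < a ∧
          ({x : A | a < x ∧ x < 2 • a} ∪ (a + ·) '' (G : Set A)) ∩ ↑B
            = ({b i, b j} : Set A) := by
        intro i j hij hjk
        obtain ⟨j', rfl⟩ : ∃ j', j = j' + 1 := ⟨j - 1, by omega⟩
        obtain ⟨u, v, hu2, hu0, huv, hvb, hbu⟩ := hinv (j' + 1)
        have hpre : pre (j' + 1) = b j' := rfl
        rw [hpre] at hu2
        obtain ⟨a, haG, hua, hav⟩ := hcos (r i) u v huv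
        refine ⟨a, hu0.trans hua, ?_⟩
        ext x
        simp only [Set.mem_inter_iff, Set.mem_union, Set.mem_setOf_eq, Set.mem_insert_iff,
          Set.mem_singleton_iff, Finset.mem_coe]
        constructor
        · rintro ⟨hx, hxB⟩
          obtain ⟨n, hn, rfl⟩ := (hmemB _).mp hxB
          rcases hx with ⟨hh1, hh2⟩ | h
          · right
            have hnj : n = j' + 1 := by
              by_contra hne
              rcases Nat.lt_or_ge n (j' + 1) with hlt | hge
              · have hle : n ≤ j' := by omega
                have h1 : b n ≤ b j' := hbmono.monotone hle
                have h2 : b j' < 2 • b j' := by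
                  rw [two_nsmul]; exact lt_add_of_pos_left _ (hbpos j')
                exact absurd hh1
                  (not_lt.mpr (h1.trans_lt ((h2.trans hu2).trans hua)).le)
              · have hge' : j' + 1 + 1 ≤ n := by omega
                have h1 : b (j' + 1 + 1) ≤ b n := hbmono.monotone hge'
                have h2 : 2 • b (j' + 1) < b (j' + 1 + 1) := hsucc (j' + 1)
                have h3 : 2 • a < 2 • b (j' + 1) := by
                  rw [two_nsmul, two_nsmul]
                  exact add_lt_add (hav.trans hvb) (hav.trans hvb)
                exact absurd hh2 (not_lt.mpr ((h3.trans (h2.trans_le h1)).le))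
            rw [hnj]
          · left
            have hni := (hcotrace a i haG n).mp ((himg a _).mp h)
            rw [hni]
        · rintro (rfl | rfl)
          · exact ⟨Or.inr ((himg a _).mpr ((hcotrace a i haG i).mpr rfl)),
              (hmemB _).mpr ⟨i, by omega, rfl⟩⟩
          · refine ⟨Or.inl ⟨hav.trans hvb, ?_⟩, (hmemB _).mpr ⟨j' + 1, hjk, rfl⟩⟩
            rw [two_nsmul]
            exact hbu.trans (add_lt_add hua hua)
      rcases hij0.lt_or_gt with hlt | hlt
      · obtain ⟨a, ha, heq⟩ := key i0 j0 hlt hj0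
        refine ⟨a, ha, ?_⟩
        rw [heq]
        simp
      · obtain ⟨a, ha, heq⟩ := key j0 i0 hlt hi0
        refine ⟨a, ha, ?_⟩
        rw [heq, Set.pair_comm]
        simp
  -- conclusion
  refine ⟨B, hBcard, hmain, ?_⟩
  set S : Set (Set A) := {T : Set A | ∃ a : A, 0 < a ∧
      T = ({x : A | a < x ∧ x < 2 • a} ∪ (a + ·) '' (G : Set A)) ∩ ↑B} with hSdef
  have hfin : S.Finite := by
    apply Set.Finite.subset (Set.Finite.finite_subsets B.finite_toSet)
    rintro T ⟨a, ha, rfl⟩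
    exact Set.inter_subset_right
  set P : Finset (Finset A) := (Finset.range 3).biUnion (fun i => B.powersetCard i) with hPdef
  have hPcard : P.card = k.choose 0 + k.choose 1 + k.choose 2 := by
    rw [hPdef, Finset.card_biUnion]
    · rw [Finset.sum_range_succ, Finset.sum_range_succ, Finset.sum_range_one]
      simp [Finset.card_powersetCard, hBcard]
    · intro i hi j hj hij
      rw [Function.onFun, Finset.disjoint_left]
      intro t hti htj
      rw [Finset.mem_powersetCard] at hti htj
      exact hij (by rw [← hti.2, htj.2])
  have hsub : (fun C : Finset A => (↑C : Set A)) '' ↑P ⊆ S := by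
    rintro T ⟨C, hCP, rfl⟩
    rw [Finset.mem_coe, hPdef, Finset.mem_biUnion] at hCP
    obtain ⟨i, hi, hCi⟩ := hCP
    rw [Finset.mem_powersetCard] at hCi
    rw [Finset.mem_range] at hi
    obtain ⟨a, ha, heq⟩ := hmain C hCi.1 (by omega)
    exact ⟨a, ha, heq.symm⟩
  calc k.choose 0 + k.choose 1 + k.choose 2 = P.card := hPcard.symm
    _ = ((fun C : Finset A => (↑C : Set A)) '' ↑P).ncard := by
        rw [Set.ncard_image_of_injective _ Finset.coe_injective, Set.ncard_coe_finset]
    _ ≤ S.ncard := Set.ncard_le_ncard hsub hfin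
end
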